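/- For even n ≥ 6 and each 3 ≤ j ≤ n-1, the lobster tree A displays the character φ_j, where φ_j = X_{≤j-3} ∪ {b_{j-2}, b_{j-1}} | a_{j-2} | a_{j-1} | b_j | b_{j+1} | {a_j, a_{j+1}} ∪ X_{≥j+2} if j is even, and φ_j = X_{≤j-3} ∪ {a_{j-2}, a_{j-1}} | b_{j-2} | b_{j-1} | a_j | a_{j+1} | {b_j, b_{j+1}} ∪ X_{≥j+2} if j is odd. -/

import Mathlib

namespace PP

/-- A vertex is a leaf (degree at most one) if it has at most one neighbour. -/
def IsLeafVert {V : Type} (G : SimpleGraph V) (w : V) : Prop :=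
  ∀ w₁ w₂ : V, G.Adj w w₁ → G.Adj w w₂ → w₁ = w₂

/-- A (finite, unrooted) phylogenetic tree on a label set `X ⊆ L`:
its leaves are bijectively labelled by the elements of `X`. -/
structure PhyloTree {L : Type} (X : Set L) where
  V : Type
  finV : Finite V
  G : SimpleGraph V
  isTree : G.IsTree
  leaf : L → V
  leaf_injOn : Set.InjOn leaf X
  leaf_isLeaf : ∀ x ∈ X, IsLeafVert G (leaf x)
  leaf_surj : ∀ w, IsLeafVert G w → ∃ x ∈ X, leaf x = w

/-- The vertex set of the minimal subtree `T[S]` spanning the leaves labelled by `S ∩ X`. -/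
def subtree {L : Type} {X : Set L} (T : PhyloTree X) (S : Set L) : Set T.V :=
  {w | ∃ x ∈ S ∩ X, ∃ y ∈ S ∩ X,
        ∃ p : T.G.Walk (T.leaf x) (T.leaf y), p.IsPath ∧ w ∈ p.support}

/-- `T` displays the character `χ` (a state assignment, whose nonempty fibres on `X`
are the states) if the minimal subtrees spanning distinct states are vertex-disjoint. -/
def displays {L : Type} {X : Set L} (T : PhyloTree X) (χ : L → ℕ) : Prop :=
  ∀ s t : ℕ, s ≠ t → Disjoint (subtree T {x | χ x = s}) (subtree T {x | χ x = t})

/-- A set of characters is compatible if some tree on `X` displays all of them. -/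
def compatible {L : Type} (X : Set L) (C : Set (L → ℕ)) : Prop :=
  ∃ T : PhyloTree X, ∀ χ ∈ C, displays T χ

/-- Labels: `(false, i)` is `aᵢ`, `(true, i)` is `bᵢ`. -/
abbrev Lbl : Type := Bool × ℕ

def a (i : ℕ) : Lbl := (false, i)
def b (i : ℕ) : Lbl := (true, i)

/-- `X = {a₁,…,aₙ,b₁,…,bₙ}`. -/
def Xset (n : ℕ) : Set Lbl := {p | 1 ≤ p.2 ∧ p.2 ≤ n}

/-- `X_{≤ i} = {aⱼ, bⱼ : 1 ≤ j ≤ i}`. -/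
def XLE (i : ℕ) : Set Lbl := {p | 1 ≤ p.2 ∧ p.2 ≤ i}

/-- χ_j = X_{≤j-2} | a_{j-1} | b_{j-1} | a_j a_{j+1} | b_j b_{j+1} | a_{j+2} | b_{j+2} | X_{≥j+3} -/
def chi (j : ℕ) : Lbl → ℕ := fun p =>
  if p.2 + 2 ≤ j then 0
  else if p.2 + 1 = j then cond p.1 2 1
  else if p.2 ≤ j + 1 then cond p.1 4 3
  else if p.2 = j + 2 then cond p.1 6 5
  else 7

def phiMain (j i : ℕ) : ℕ :=
  if i < j then 0 else if i = j then 3 else if i = j + 1 then 4 else 5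

def phiSide (j i : ℕ) : ℕ :=
  if i + 3 ≤ j then 0 else if i + 2 = j then 1 else if i + 1 = j then 2 else 5

/-- For even j: φ_j = X_{≤j-3}∪{b_{j-2},b_{j-1}} | a_{j-2} | a_{j-1} | b_j | b_{j+1} | {a_j,a_{j+1}}∪X_{≥j+2};
for odd j the roles of a and b are swapped. -/
def phi (j : ℕ) : Lbl → ℕ := fun p =>
  if j % 2 = 0 then cond p.1 (phiMain j p.2) (phiSide j p.2)
  else cond p.1 (phiSide j p.2) (phiMain j p.2)

/-- Ω_A = a₁b₁b₂ | {a₂} ∪ X_{≥3}. -/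
def OmA : Lbl → ℕ := fun p =>
  cond p.1 (if p.2 ≤ 2 then 0 else 1) (if p.2 = 1 then 0 else 1)

/-- Ω_B = X_{≤n-2} ∪ {b_{n-1}} | a_{n-1} aₙ bₙ. -/
def OmB (n : ℕ) : Lbl → ℕ := fun p =>
  cond p.1 (if p.2 = n then 1 else 0) (if p.2 + 1 ≥ n then 1 else 0)

/-- The edges of the lobster `A`: central path a₁,u₁,…,u_{n-1},aₙ; edges uᵢvᵢ;
for odd i, vᵢ is adjacent to bᵢ and b_{i+1}; for even i, vᵢ is adjacent to aᵢ and a_{i+1}. -/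
def AdjSpecA (n : ℕ) {X : Set Lbl} (T : PhyloTree X) (u v : ℕ → T.V) (w w' : T.V) : Prop :=
  (w = T.leaf (a 1) ∧ w' = u 1) ∨
  (∃ i, 1 ≤ i ∧ i + 1 ≤ n - 1 ∧ w = u i ∧ w' = u (i + 1)) ∨
  (w = u (n - 1) ∧ w' = T.leaf (a n)) ∨
  (∃ i, 1 ≤ i ∧ i ≤ n - 1 ∧ w = u i ∧ w' = v i) ∨
  (∃ i, 1 ≤ i ∧ i ≤ n - 1 ∧ i % 2 = 1 ∧ w = v i ∧
      (w' = T.leaf (b i) ∨ w' = T.leaf (b (i + 1)))) ∨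
  (∃ i, 1 ≤ i ∧ i ≤ n - 1 ∧ i % 2 = 0 ∧ w = v i ∧
      (w' = T.leaf (a i) ∨ w' = T.leaf (a (i + 1))))

/-- `T`, with internal vertices `u i`, `v i` (1 ≤ i ≤ n-1), is the lobster `A`. -/
def IsLobsterA (n : ℕ) (T : PhyloTree (Xset n)) (u v : ℕ → T.V) : Prop :=
  (∀ i j, 1 ≤ i → i ≤ n - 1 → 1 ≤ j → j ≤ n - 1 →
      (u i = u j → i = j) ∧ (v i = v j → i = j) ∧ u i ≠ v j) ∧
  (∀ p ∈ Xset n, ∀ i, 1 ≤ i → i ≤ n - 1 → T.leaf p ≠ u i ∧ T.leaf p ≠ v i) ∧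
  (∀ w : T.V, (∃ p ∈ Xset n, T.leaf p = w) ∨
      (∃ i, 1 ≤ i ∧ i ≤ n - 1 ∧ (u i = w ∨ v i = w))) ∧
  (∀ w w' : T.V, T.G.Adj w w' ↔ (AdjSpecA n T u v w w' ∨ AdjSpecA n T u v w' w))

section Aux

lemma tree_path_subset {V : Type} {G : SimpleGraph V} (hT : G.IsTree) {x y : V}
    (p : G.Walk x y) (hp : p.IsPath) (q : G.Walk x y) : ∀ w ∈ p.support, w ∈ q.support := by
  classical
  intro w hw
  obtain ⟨r, -, hr⟩ := hT.existsUnique_path x y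
  have hpq : p = q.bypass := by
    rw [hr p hp, hr q.bypass q.bypass_isPath]
  exact q.support_bypass_subset (hpq ▸ hw)

lemma loop_path_support {V : Type} {G : SimpleGraph V} {x : V}
    (p : G.Walk x x) (hp : p.IsPath) : p.support = [x] := by
  cases p with
  | nil => rfl
  | cons h q =>
    exfalso
    have := hp.support_nodup
    rw [SimpleGraph.Walk.support_cons] at this
    exact (List.nodup_cons.mp this).1 q.end_mem_support

lemma walkChain {V : Type} {G : SimpleGraph V} (u : ℕ → V) (N : ℕ)
    (hadj : ∀ m, 1 ≤ m → m + 1 ≤ N → G.Adj (u m) (u (m+1))) :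
    ∀ i i', 1 ≤ i → i ≤ i' → i' ≤ N →
    ∃ q : G.Walk (u i) (u i'), ∀ w ∈ q.support, ∃ m, i ≤ m ∧ m ≤ i' ∧ w = u m := by
  intro i i' h1 h2 h3
  induction i', h2 using Nat.le_induction with
  | base =>
    exact ⟨SimpleGraph.Walk.nil,
      fun w hw => ⟨i, le_refl _, le_refl _, (show w = u i by simpa using hw)⟩⟩
  | succ i' hii' ih =>
    obtain ⟨q, hq⟩ := ih (by omega)
    refine ⟨q.append (SimpleGraph.Walk.cons (hadj i' (by omega) h3) SimpleGraph.Walk.nil), ?_⟩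
    intro w hw
    rw [SimpleGraph.Walk.mem_support_append_iff] at hw
    rcases hw with hw | hw
    · obtain ⟨m, hm1, hm2, hm3⟩ := hq w hw
      exact ⟨m, hm1, by omega, hm3⟩
    · simp only [SimpleGraph.Walk.support_cons, SimpleGraph.Walk.support_nil,
        List.mem_cons, List.mem_singleton] at hw
      rcases hw with hw | hw | hw
      · exact ⟨i', by omega, by omega, hw⟩
      · exact ⟨i'+1, by omega, le_refl _, hw⟩
      · cases hw

lemma phi_le_five (j : ℕ) (p : Lbl) : phi j p ≤ 5 := by
  obtain ⟨t, i⟩ := p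
  cases t <;> rcases Nat.mod_two_eq_zero_or_one j with hj | hj <;>
    simp [phi, phiMain, phiSide, hj] <;> split_ifs <;> omega

lemma phi_singleton (j s : ℕ) (hs : 1 ≤ s ∧ s ≤ 4) (p q : Lbl)
    (hp : phi j p = s) (hq : phi j q = s) : p = q := by
  obtain ⟨t, i⟩ := p
  obtain ⟨t', i'⟩ := q
  cases t <;> cases t' <;>
    simp only [phi, phiMain, phiSide, cond_true, cond_false] at hp hq <;>
    split_ifs at hp hq <;> simp_all <;> omega

lemma phi_zero (j : ℕ) (t : Bool) (i : ℕ) (h : phi j (t, i) = 0) :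
    i + 3 ≤ j ∨ (i < j ∧ (cond t 1 0) ≠ j % 2) := by
  cases t <;>
    simp only [phi, phiMain, phiSide, cond_true, cond_false] at h ⊢ <;>
    split_ifs at h <;> omega

lemma phi_five (j : ℕ) (t : Bool) (i : ℕ) (h : phi j (t, i) = 5) :
    j + 2 ≤ i ∨ (j ≤ i ∧ (cond t 1 0) = j % 2) := by
  cases t <;>
    simp only [phi, phiMain, phiSide, cond_true, cond_false] at h ⊢ <;>
    split_ifs at h <;> omega

end Aux

theorem lobsterA_displays_phi (n : ℕ) (hn : Even n) (hn6 : 6 ≤ n)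
    (T : PhyloTree (Xset n)) (u v : ℕ → T.V) (hA : IsLobsterA n T u v)
    (j : ℕ) (hj : 3 ≤ j) (hj' : j ≤ n - 1) :
    displays T (phi j) := by
  classical
  obtain ⟨hinj, hne, -, hadj⟩ := hA
  have hn2 : n % 2 = 0 := Nat.even_iff.mp hn
  have adj_a1 : T.G.Adj (T.leaf (a 1)) (u 1) :=
    (hadj _ _).mpr (Or.inl (Or.inl ⟨rfl, rfl⟩))
  have adj_uu : ∀ m, 1 ≤ m → m + 1 ≤ n - 1 → T.G.Adj (u m) (u (m+1)) := fun m h1 h2 =>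
    (hadj _ _).mpr (Or.inl (Or.inr (Or.inl ⟨m, h1, h2, rfl, rfl⟩)))
  have adj_an : T.G.Adj (u (n-1)) (T.leaf (a n)) :=
    (hadj _ _).mpr (Or.inl (Or.inr (Or.inr (Or.inl ⟨rfl, rfl⟩))))
  have adj_uv : ∀ m, 1 ≤ m → m ≤ n - 1 → T.G.Adj (u m) (v m) := fun m h1 h2 =>
    (hadj _ _).mpr (Or.inl (Or.inr (Or.inr (Or.inr (Or.inl ⟨m, h1, h2, rfl, rfl⟩)))))
  have adj_vleaf : ∀ (t : Bool) (i m : ℕ), 1 ≤ m → m ≤ n - 1 → m % 2 = cond t 1 0 →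
      (i = m ∨ i = m + 1) → T.G.Adj (v m) (T.leaf (t, i)) := by
    intro t i m h1 h2 hpar him
    cases t
    · refine (hadj _ _).mpr (Or.inl (Or.inr (Or.inr (Or.inr (Or.inr (Or.inr
        ⟨m, h1, h2, hpar, rfl, ?_⟩))))))
      rcases him with h | h
      · exact Or.inl (by rw [h]; rfl)
      · exact Or.inr (by rw [h]; rfl)
    · refine (hadj _ _).mpr (Or.inl (Or.inr (Or.inr (Or.inr (Or.inr (Or.inl
        ⟨m, h1, h2, hpar, rfl, ?_⟩))))))
      rcases him with h | h
      · exact Or.inl (by rw [h]; rfl)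
      · exact Or.inr (by rw [h]; rfl)
  set I0 : Set T.V := {w | ∃ m, 1 ≤ m ∧ m ≤ j - 1 ∧ (w = u m ∨ w = v m)} with hI0def
  set I5 : Set T.V := {w | ∃ m, j ≤ m ∧ m ≤ n - 1 ∧ (w = u m ∨ w = v m)} with hI5def
  have attach : ∀ (t : Bool) (i : ℕ), 1 ≤ i → ¬(t = false ∧ i = 1) →
      ∃ m, 1 ≤ m ∧ m % 2 = cond t 1 0 ∧ (i = m ∨ i = m + 1) := by
    intro t i hi1 hsp
    cases t with
    | false =>
      have hi2 : 2 ≤ i := by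
        rcases Nat.lt_or_ge i 2 with h | h
        · exact absurd ⟨rfl, by omega⟩ hsp
        · exact h
      rcases Nat.mod_two_eq_zero_or_one i with h | h
      · exact ⟨i, by omega, h, Or.inl rfl⟩
      · exact ⟨i - 1, by omega, show (i-1) % 2 = 0 by omega, Or.inr (by omega)⟩
    | true =>
      rcases Nat.mod_two_eq_zero_or_one i with h | h
      · exact ⟨i - 1, by omega, show (i-1) % 2 = 1 by omega, Or.inr (by omega)⟩
      · exact ⟨i, by omega, h, Or.inl rfl⟩
  have hub0 : ∀ x, x ∈ Xset n → phi j x = 0 → ∃ q : T.G.Walk (T.leaf x) (u 1),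
      ∀ w ∈ q.support, (∃ p, p ∈ Xset n ∧ phi j p = 0 ∧ w = T.leaf p) ∨ w ∈ I0 := by
    intro x hxX hx0
    obtain ⟨t, i⟩ := x
    have hi1 : 1 ≤ i := hxX.1
    have hin : i ≤ n := hxX.2
    by_cases hsp : t = false ∧ i = 1
    · obtain ⟨ht, hi⟩ := hsp
      subst ht; subst hi
      refine ⟨SimpleGraph.Walk.cons (show T.G.Adj (T.leaf (false, 1)) (u 1) from adj_a1) SimpleGraph.Walk.nil, ?_⟩
      intro w hw
      simp only [SimpleGraph.Walk.support_cons, SimpleGraph.Walk.support_nil,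
        List.mem_cons, List.mem_singleton] at hw
      rcases hw with hw | hw | hw
      · exact Or.inl ⟨(false, 1), hxX, hx0, hw⟩
      · exact Or.inr ⟨1, le_refl _, by omega, Or.inl hw⟩
      · cases hw
    · obtain ⟨m, hm1, hm2, him⟩ := attach t i hi1 hsp
      have hz := phi_zero j t i hx0
      have hmj : m ≤ j - 1 := by
        cases t <;> simp only [cond_true, cond_false] at hz hm2 <;> omega
      have hmn : m ≤ n - 1 := by omega
      have adj1 : T.G.Adj (v m) (T.leaf (t, i)) := adj_vleaf t i m hm1 hmn hm2 him
      have adj2 : T.G.Adj (u m) (v m) := adj_uv m hm1 hmn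
      obtain ⟨qc, hqc⟩ := walkChain u (n - 1) adj_uu 1 m (le_refl 1) hm1 hmn
      refine ⟨SimpleGraph.Walk.cons adj1.symm (SimpleGraph.Walk.cons adj2.symm qc.reverse), ?_⟩
      intro w hw
      simp only [SimpleGraph.Walk.support_cons, List.mem_cons] at hw
      rcases hw with hw | hw | hw
      · exact Or.inl ⟨(t, i), hxX, hx0, hw⟩
      · exact Or.inr ⟨m, hm1, hmj, Or.inr hw⟩
      · rw [SimpleGraph.Walk.support_reverse, List.mem_reverse] at hw
        obtain ⟨m', h1, h2, h3⟩ := hqc w hw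
        exact Or.inr ⟨m', h1, by omega, Or.inl h3⟩
  have hub5 : ∀ x, x ∈ Xset n → phi j x = 5 → ∃ q : T.G.Walk (T.leaf x) (u (n-1)),
      ∀ w ∈ q.support, (∃ p, p ∈ Xset n ∧ phi j p = 5 ∧ w = T.leaf p) ∨ w ∈ I5 := by
    intro x hxX hx5
    obtain ⟨t, i⟩ := x
    have hi1 : 1 ≤ i := hxX.1
    have hin : i ≤ n := hxX.2
    have hz := phi_five j t i hx5
    by_cases hsp : t = false ∧ i = n
    · obtain ⟨ht, hi⟩ := hsp
      subst ht
      rw [hi] at hxX hx5 ⊢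
      refine ⟨SimpleGraph.Walk.cons (show T.G.Adj (T.leaf (false, n)) (u (n-1)) from adj_an.symm) SimpleGraph.Walk.nil, ?_⟩
      intro w hw
      simp only [SimpleGraph.Walk.support_cons, SimpleGraph.Walk.support_nil,
        List.mem_cons, List.mem_singleton] at hw
      rcases hw with hw | hw | hw
      · exact Or.inl ⟨(false, n), hxX, hx5, hw⟩
      · exact Or.inr ⟨n - 1, by omega, le_refl _, Or.inl hw⟩
      · cases hw
    · have hsp' : ¬(t = false ∧ i = 1) := by
        rintro ⟨rfl, rfl⟩
        simp only [cond_false] at hz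
        omega
      obtain ⟨m, hm1, hm2, him⟩ := attach t i hi1 hsp'
      have hmb : j ≤ m ∧ m ≤ n - 1 := by
        cases t
        · have hi_ne : i ≠ n := fun h => hsp ⟨rfl, h⟩
          simp only [cond_false] at hz hm2
          omega
        · simp only [cond_true] at hz hm2
          omega
      have adj1 : T.G.Adj (v m) (T.leaf (t, i)) := adj_vleaf t i m hm1 hmb.2 hm2 him
      have adj2 : T.G.Adj (u m) (v m) := adj_uv m hm1 hmb.2
      obtain ⟨qc, hqc⟩ := walkChain u (n - 1) adj_uu m (n - 1) hm1 hmb.2 (le_refl _)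
      refine ⟨SimpleGraph.Walk.cons adj1.symm (SimpleGraph.Walk.cons adj2.symm qc), ?_⟩
      intro w hw
      simp only [SimpleGraph.Walk.support_cons, List.mem_cons] at hw
      rcases hw with hw | hw | hw
      · exact Or.inl ⟨(t, i), hxX, hx5, hw⟩
      · exact Or.inr ⟨m, hmb.1, hmb.2, Or.inr hw⟩
      · obtain ⟨m', h1, h2, h3⟩ := hqc w hw
        exact Or.inr ⟨m', by omega, h2, Or.inl h3⟩
  -- classification of subtree membership
  have hkey : ∀ s w, w ∈ subtree T {x | phi j x = s} →
      (∃ p, p ∈ Xset n ∧ phi j p = s ∧ w = T.leaf p) ∨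
      (s = 0 ∧ w ∈ I0) ∨ (s = 5 ∧ w ∈ I5) := by
    intro s w hw
    obtain ⟨x, hx, y, hy, pw, hp, hwp⟩ := hw
    have hxs : phi j x = s := hx.1
    have hys : phi j y = s := hy.1
    by_cases hs0 : s = 0
    · subst hs0
      obtain ⟨qx, hqx⟩ := hub0 x hx.2 hxs
      obtain ⟨qy, hqy⟩ := hub0 y hy.2 hys
      have hq := tree_path_subset T.isTree pw hp (qx.append qy.reverse) w hwp
      rw [SimpleGraph.Walk.mem_support_append_iff] at hq
      rcases hq with hq | hq
      · rcases hqx w hq with h | h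
        · exact Or.inl h
        · exact Or.inr (Or.inl ⟨rfl, h⟩)
      · rw [SimpleGraph.Walk.support_reverse, List.mem_reverse] at hq
        rcases hqy w hq with h | h
        · exact Or.inl h
        · exact Or.inr (Or.inl ⟨rfl, h⟩)
    · by_cases hs5 : s = 5
      · subst hs5
        obtain ⟨qx, hqx⟩ := hub5 x hx.2 hxs
        obtain ⟨qy, hqy⟩ := hub5 y hy.2 hys
        have hq := tree_path_subset T.isTree pw hp (qx.append qy.reverse) w hwp
        rw [SimpleGraph.Walk.mem_support_append_iff] at hq
        rcases hq with hq | hq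
        · rcases hqx w hq with h | h
          · exact Or.inl h
          · exact Or.inr (Or.inr ⟨rfl, h⟩)
        · rw [SimpleGraph.Walk.support_reverse, List.mem_reverse] at hq
          rcases hqy w hq with h | h
          · exact Or.inl h
          · exact Or.inr (Or.inr ⟨rfl, h⟩)
      · have hs5' : s ≤ 5 := hxs ▸ phi_le_five j x
        have hs14 : 1 ≤ s ∧ s ≤ 4 := by omega
        have hxy : x = y := phi_singleton j s hs14 x y hxs hys
        subst hxy
        rw [loop_path_support pw hp] at hwp
        simp only [List.mem_singleton] at hwp
        exact Or.inl ⟨x, hx.2, hxs, hwp⟩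
  -- disjointness of the containers
  have hleafI0 : ∀ p, p ∈ Xset n → ∀ w, w ∈ I0 → T.leaf p ≠ w := by
    intro p hp w hw
    obtain ⟨m, h1, h2, hw⟩ := hw
    rcases hw with rfl | rfl
    · exact (hne p hp m h1 (by omega)).1
    · exact (hne p hp m h1 (by omega)).2
  have hleafI5 : ∀ p, p ∈ Xset n → ∀ w, w ∈ I5 → T.leaf p ≠ w := by
    intro p hp w hw
    obtain ⟨m, h1, h2, hw⟩ := hw
    rcases hw with rfl | rfl
    · exact (hne p hp m (by omega) h2).1
    · exact (hne p hp m (by omega) h2).2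
  have hI05 : ∀ w, w ∈ I0 → w ∈ I5 → False := by
    intro w hw hw'
    obtain ⟨m, h1, h2, hw⟩ := hw
    obtain ⟨m', h1', h2', hw'⟩ := hw'
    have hb : m ≤ n - 1 := by omega
    have hb' : 1 ≤ m' := by omega
    rcases hw with hw | hw <;> rcases hw' with hw' | hw'
    · have := (hinj m m' h1 hb hb' h2').1 (hw.symm.trans hw')
      omega
    · exact (hinj m m' h1 hb hb' h2').2.2 (hw.symm.trans hw')
    · exact (hinj m' m hb' h2' h1 hb).2.2 (hw'.symm.trans hw)
    · have := (hinj m m' h1 hb hb' h2').2.1 (hw.symm.trans hw')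
      omega
  intro s t hst
  rw [Set.disjoint_left]
  intro w hws hwt
  rcases hkey s w hws with ⟨p, hpX, hps, hwp⟩ | ⟨hs0, hI⟩ | ⟨hs5, hI⟩ <;>
    rcases hkey t w hwt with ⟨q, hqX, hqt, hwq⟩ | ⟨ht0, hI'⟩ | ⟨ht5, hI'⟩
  · have hpq : p = q := T.leaf_injOn hpX hqX (hwp.symm.trans hwq)
    exact hst (by rw [← hps, ← hqt, hpq])
  · exact hleafI0 p hpX w hI' hwp.symm
  · exact hleafI5 p hpX w hI' hwp.symm
  · exact hleafI0 q hqX w hI hwq.symm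
  · exact hst (hs0.trans ht0.symm)
  · exact hI05 w hI hI'
  · exact hleafI5 q hqX w hI hwq.symm
  · exact hI05 w hI' hI
  · exact hst (hs5.trans ht5.symm)


end PP
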